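/- (O'Neil's hyperplane-cut bound) There is a constant C such that for every n ≥ 1, every affine hyperplane in ℝ^n cuts at most C·√n·2^n edges of the Boolean hypercube {0,1}^n, where a hyperplane {x : ⟨a,x⟩ = b} cuts an edge {u,v} if ⟨a,u⟩ < b < ⟨a,v⟩ or ⟨a,v⟩ < b < ⟨a,u⟩. -/

import Mathlib

open Finset

/-- Dot product of a real vector with the 0/1 embedding of a Boolean vector. -/
def dotBool (n : ℕ) (a : Fin n → ℝ) (u : Fin n → Bool) : ℝ :=
  ∑ j : Fin n, a j * (if u j then 1 else 0)

/-- Edges of the hypercube strictly cut by the hyperplane `⟨a, x⟩ = b`, each edge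
represented by its lower endpoint together with the direction coordinate. -/
noncomputable def cutEdges (n : ℕ) (a : Fin n → ℝ) (b : ℝ) :
    Finset ((Fin n → Bool) × Fin n) :=
  Finset.univ.filter fun p =>
    p.1 p.2 = false ∧
      (dotBool n a p.1 < b ∧ b < dotBool n a (Function.update p.1 p.2 true) ∨
       dotBool n a (Function.update p.1 p.2 true) < b ∧ b < dotBool n a p.1)

namespace Oneil
open Equiv
variable {n : ℕ} (a : Fin n → ℝ)


noncomputable def bSign (a : Fin n → ℝ) : Fin n → Bool := fun j => decide (a j < 0)

noncomputable def Dset (a : Fin n → ℝ) (u : Fin n → Bool) : Finset (Fin n) :=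
  Finset.univ.filter fun i => u i ≠ bSign a i

lemma dot_eq (u : Fin n → Bool) :
    dotBool n a u = dotBool n a (bSign a) + ∑ i ∈ Dset a u, |a i| := by
  unfold dotBool Dset
  rw [Finset.sum_filter, ← Finset.sum_add_distrib]
  refine Finset.sum_congr rfl fun j _ => ?_
  by_cases h : a j < 0 <;> cases hu : u j <;>
    simp [bSign, h, hu, abs_of_neg, abs_of_nonneg, le_of_not_gt]

lemma dot_update (u : Fin n → Bool) (j : Fin n) (hj : u j = false) :
    dotBool n a (Function.update u j true) = dotBool n a u + a j := by
  unfold dotBool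
  have h1 : ∀ x, a x * (if Function.update u j true x then 1 else 0) =
      Function.update (fun x => a x * (if u x then 1 else 0)) j (a j) x := by
    intro x
    by_cases hx : x = j
    · subst hx; simp
    · simp [Function.update_of_ne hx]
  rw [Finset.sum_congr rfl (fun x _ => h1 x), Finset.sum_update_of_mem (Finset.mem_univ j)]
  have h2 : ∑ x : Fin n, a x * (if u x then 1 else 0)
      = a j * (if u j then 1 else 0) + ∑ x ∈ Finset.univ \ {j}, a x * (if u x then 1 else 0) := by
    rw [Finset.sum_eq_add_sum_sdiff_singleton_of_mem (Finset.mem_univ j)]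
  rw [h2, hj]
  ring_nf
  simp

/-- The chain-lower endpoint of an edge. -/
noncomputable def lowEnd (a : Fin n → ℝ) (p : (Fin n → Bool) × Fin n) : Fin n → Bool :=
  if a p.2 < 0 then Function.update p.1 p.2 true else p.1

lemma mem_props {b : ℝ} {p : (Fin n → Bool) × Fin n} (hp : p ∈ cutEdges n a b) :
    lowEnd a p p.2 = bSign a p.2 ∧
    dotBool n a (lowEnd a p) < b ∧ b < dotBool n a (lowEnd a p) + |a p.2| := by
  rw [cutEdges, Finset.mem_filter] at hp
  obtain ⟨-, h1, hcut⟩ := hp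
  have hupd := dot_update a p.1 p.2 h1
  by_cases h : a p.2 < 0
  · have habs : |a p.2| = -(a p.2) := abs_of_neg h
    rcases hcut with ⟨hA, hB⟩ | ⟨hA, hB⟩
    · exfalso; linarith
    · refine ⟨?_, ?_, ?_⟩
      · simp [lowEnd, h, bSign]
      · simpa [lowEnd, h, hupd] using hA
      · simp only [lowEnd, if_pos h, hupd, habs]; linarith
  · have habs : |a p.2| = a p.2 := abs_of_nonneg (le_of_not_gt h)
    rcases hcut with ⟨hA, hB⟩ | ⟨hA, hB⟩
    · refine ⟨?_, ?_, ?_⟩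
      · simp [lowEnd, h, bSign, h1]
      · simpa [lowEnd, h] using hA
      · simp only [lowEnd, if_neg h, habs]; linarith
    · exfalso; linarith

lemma j_not_mem {b : ℝ} {p : (Fin n → Bool) × Fin n} (hp : p ∈ cutEdges n a b) :
    p.2 ∉ Dset a (lowEnd a p) := by
  have := (mem_props a hp).1
  simp [Dset, this]

lemma k_lt_n {b : ℝ} {p : (Fin n → Bool) × Fin n} (hp : p ∈ cutEdges n a b) :
    (Dset a (lowEnd a p)).card < n := by
  have h := j_not_mem a hp
  have hsub : Dset a (lowEnd a p) ⊆ Finset.univ.erase p.2 := by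
    intro i hi
    rcases eq_or_ne i p.2 with rfl | hne
    · exact absurd hi h
    · exact Finset.mem_erase.mpr ⟨hne, Finset.mem_univ i⟩
  have := Finset.card_le_card hsub
  rw [Finset.card_erase_of_mem (Finset.mem_univ _), Finset.card_univ, Fintype.card_fin] at this
  have hn : 0 < n := p.2.pos
  omega

lemma sum_bounds {b : ℝ} {p : (Fin n → Bool) × Fin n} (hp : p ∈ cutEdges n a b) :
    ∑ i ∈ Dset a (lowEnd a p), |a i| < b - dotBool n a (bSign a) ∧
    b - dotBool n a (bSign a) < ∑ i ∈ Dset a (lowEnd a p), |a i| + |a p.2| := by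
  obtain ⟨-, h2, h3⟩ := mem_props a hp
  rw [dot_eq a (lowEnd a p)] at h2 h3
  constructor <;> linarith

lemma edge_inj {b : ℝ} {p q : (Fin n → Bool) × Fin n} (hp : p ∈ cutEdges n a b)
    (hq : q ∈ cutEdges n a b) (hD : Dset a (lowEnd a p) = Dset a (lowEnd a q))
    (hj : p.2 = q.2) : p = q := by
  have hw : lowEnd a p = lowEnd a q := by
    funext i
    have h1 : (lowEnd a p i ≠ bSign a i) ↔ i ∈ Dset a (lowEnd a p) := by simp [Dset]
    have h2 : (lowEnd a q i ≠ bSign a i) ↔ i ∈ Dset a (lowEnd a q) := by simp [Dset]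
    rw [hD] at h1
    rw [← h2] at h1
    cases hx : lowEnd a p i <;> cases hy : lowEnd a q i <;> simp_all
  rw [cutEdges, Finset.mem_filter] at hp hq
  have hu : p.1 = q.1 := by
    have e1 : p.1 = if a p.2 < 0 then Function.update (lowEnd a p) p.2 false else lowEnd a p := by
      by_cases h : a p.2 < 0
      · simp only [lowEnd, if_pos h]
        funext i
        rcases eq_or_ne i p.2 with rfl | hne
        · simp [hp.2.1]
        · simp [Function.update_of_ne hne]
      · simp [lowEnd, h]
    have e2 : q.1 = if a q.2 < 0 then Function.update (lowEnd a q) q.2 false else lowEnd a q := by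
      by_cases h : a q.2 < 0
      · simp only [lowEnd, if_pos h]
        funext i
        rcases eq_or_ne i q.2 with rfl | hne
        · simp [hq.2.1]
        · simp [Function.update_of_ne hne]
      · simp [lowEnd, h]
    rw [e1, e2, hw, hj]
  exact Prod.ext hu hj



lemma card_perm_stab {α : Type*} [Fintype α] [DecidableEq α] (p : α → Prop) [DecidablePred p]
    (c : α) (hc : ¬ p c) :
    Nat.factorial (Fintype.card {x // p x}) *
      Nat.factorial (Fintype.card α - Fintype.card {x // p x} - 1) ≤
      (Finset.univ.filter fun σ : Equiv.Perm α => (∀ x, p x → p (σ x)) ∧ σ c = c).card := by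
  classical
  let Ψ : Equiv.Perm {x // p x} × Equiv.Perm {y : {x // ¬ p x} // y ≠ ⟨c, hc⟩} → Equiv.Perm α :=
    fun τ => Equiv.Perm.subtypeCongr τ.1 (Equiv.Perm.subtypeCongr τ.2 1)
  have hmem : ∀ τ, Ψ τ ∈ (Finset.univ.filter fun σ : Equiv.Perm α =>
      (∀ x, p x → p (σ x)) ∧ σ c = c) := by
    intro ⟨τ₁, τ₂⟩
    rw [Finset.mem_filter]
    refine ⟨Finset.mem_univ _, fun x hx => ?_, ?_⟩
    · show p ((Equiv.Perm.subtypeCongr τ₁ (Equiv.Perm.subtypeCongr τ₂ 1)) x)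
      rw [Equiv.Perm.subtypeCongr.left_apply _ _ hx]
      exact (τ₁ ⟨x, hx⟩).2
    · show (Equiv.Perm.subtypeCongr τ₁ (Equiv.Perm.subtypeCongr τ₂ 1)) c = c
      rw [Equiv.Perm.subtypeCongr.right_apply _ _ hc]
      simp [Equiv.Perm.subtypeCongr.apply]
  have hinj : Function.Injective Ψ := by
    rintro ⟨τ₁, τ₂⟩ ⟨τ₁', τ₂'⟩ h
    have hx : ∀ x : α, (Equiv.Perm.subtypeCongr τ₁ (Equiv.Perm.subtypeCongr τ₂ 1)) x
        = (Equiv.Perm.subtypeCongr τ₁' (Equiv.Perm.subtypeCongr τ₂' 1)) x := fun x => by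
      show Ψ (τ₁, τ₂) x = Ψ (τ₁', τ₂') x
      rw [h]
    simp only [Prod.mk.injEq]
    constructor
    · ext y
      have h1 := hx ↑y
      rw [Equiv.Perm.subtypeCongr.left_apply_subtype, Equiv.Perm.subtypeCongr.left_apply_subtype]
        at h1
      exact h1
    · ext z
      have h1 := hx ((z : {x // ¬ p x}) : α)
      rw [Equiv.Perm.subtypeCongr.right_apply_subtype, Equiv.Perm.subtypeCongr.right_apply_subtype]
        at h1
      have h2 : (Equiv.Perm.subtypeCongr τ₂ 1) ↑z = (Equiv.Perm.subtypeCongr τ₂' 1) ↑z :=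
        Subtype.ext h1
      rw [Equiv.Perm.subtypeCongr.left_apply_subtype, Equiv.Perm.subtypeCongr.left_apply_subtype]
        at h2
      exact congrArg Subtype.val h2
  have hcardprod : Fintype.card (Equiv.Perm {x // p x} ×
      Equiv.Perm {y : {x // ¬ p x} // y ≠ ⟨c, hc⟩}) =
      Nat.factorial (Fintype.card {x // p x}) *
        Nat.factorial (Fintype.card α - Fintype.card {x // p x} - 1) := by
    rw [Fintype.card_prod, Fintype.card_perm, Fintype.card_perm]
    congr 2
    have e2 : Fintype.card {x // ¬ p x} = Fintype.card α - Fintype.card {x // p x} :=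
      Fintype.card_subtype_compl p
    have e3 : Fintype.card {y : {x // ¬ p x} // y ≠ ⟨c, hc⟩} = Fintype.card {x // ¬ p x} - 1 := by
      rw [Fintype.card_subtype_compl (· = (⟨c, hc⟩ : {x // ¬ p x})), Fintype.card_subtype_eq]
    rw [e3, e2]
  calc Nat.factorial (Fintype.card {x // p x}) *
        Nat.factorial (Fintype.card α - Fintype.card {x // p x} - 1)
      = (Finset.univ : Finset (Equiv.Perm {x // p x} ×
          Equiv.Perm {y : {x // ¬ p x} // y ≠ ⟨c, hc⟩})).card := by
        rw [Finset.card_univ, hcardprod]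
    _ ≤ _ := Finset.card_le_card_of_injOn Ψ (fun τ _ => hmem τ) hinj.injOn

lemma card_val_lt {m : ℕ} (hm : m ≤ n) :
    Fintype.card {x : Fin n // (x : ℕ) < m} = m := by
  have e : {x : Fin n // (x : ℕ) < m} ≃ Fin m :=
    { toFun := fun x => ⟨x.1.1, x.2⟩
      invFun := fun i => ⟨⟨i.1, lt_of_lt_of_le i.2 hm⟩, i.2⟩
      left_inv := fun x => rfl
      right_inv := fun i => rfl }
  rw [Fintype.card_congr e, Fintype.card_fin]

lemma card_filter_lt {m : ℕ} (hm : m ≤ n) :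
    (Finset.univ.filter fun x : Fin n => (x : ℕ) < m).card = m := by
  rw [← Fintype.card_subtype]; exact card_val_lt hm

lemma perm_count (D : Finset (Fin n)) (j : Fin n) (hj : j ∉ D) (hkn : D.card < n) :
    Nat.factorial D.card * Nat.factorial (n - 1 - D.card) ≤
      (Finset.univ.filter fun ρ : Equiv.Perm (Fin n) =>
        (∀ i ∈ D, ((ρ i : Fin n) : ℕ) < D.card) ∧ ((ρ j : Fin n) : ℕ) = D.card).card := by
  classical
  set k := D.card with hk
  have hcard : Fintype.card {x : Fin n // x ∈ D} = Fintype.card {x : Fin n // (x : ℕ) < k} := by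
    rw [Fintype.card_coe, card_val_lt (le_of_lt hkn)]
  let f1 : {x : Fin n // x ∈ D} ≃ {x : Fin n // (x : ℕ) < k} := Fintype.equivOfCardEq hcard
  let ρ₁ : Equiv.Perm (Fin n) := f1.extendSubtype
  have hρ₁D : ∀ i ∈ D, ((ρ₁ i : Fin n) : ℕ) < k := fun i hi => f1.extendSubtype_mem i hi
  set kF : Fin n := ⟨k, hkn⟩ with hkF
  set ρ₀ : Equiv.Perm (Fin n) := (Equiv.swap (ρ₁ j) kF) * ρ₁ with hρ₀
  have hρ₀D : ∀ i ∈ D, ((ρ₀ i : Fin n) : ℕ) < k := by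
    intro i hi
    have h1 : ((ρ₁ i : Fin n) : ℕ) < k := hρ₁D i hi
    have hne1 : ρ₁ i ≠ ρ₁ j := by
      intro h
      exact hj (by rwa [ρ₁.injective h] at hi)
    have hne2 : ρ₁ i ≠ kF := by
      intro h
      rw [h] at h1
      exact absurd h1 (by simp [hkF])
    show ((Equiv.swap (ρ₁ j) kF) (ρ₁ i) : ℕ) < k
    rw [Equiv.swap_apply_of_ne_of_ne hne1 hne2]
    exact h1
  have hρ₀j : ρ₀ j = kF := by
    show (Equiv.swap (ρ₁ j) kF) (ρ₁ j) = kF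
    rw [Equiv.swap_apply_left]
  have key := card_perm_stab (fun x : Fin n => (x : ℕ) < k) kF (by simp [hkF])
  rw [card_val_lt (le_of_lt hkn), Fintype.card_fin] at key
  have hnk : n - k - 1 = n - 1 - k := by omega
  rw [hnk] at key
  have step : (Finset.univ.filter fun σ : Equiv.Perm (Fin n) =>
      (∀ x : Fin n, (x : ℕ) < k → ((σ x : Fin n) : ℕ) < k) ∧ σ kF = kF).card ≤
      (Finset.univ.filter fun ρ : Equiv.Perm (Fin n) =>
        (∀ i ∈ D, ((ρ i : Fin n) : ℕ) < D.card) ∧ ((ρ j : Fin n) : ℕ) = D.card).card := by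
    apply Finset.card_le_card_of_injOn (fun σ => σ * ρ₀)
    · intro σ hσ
      rw [Finset.mem_coe, Finset.mem_filter] at hσ ⊢
      obtain ⟨-, hpres, hfix⟩ := hσ
      refine ⟨Finset.mem_univ _, fun i hi => ?_, ?_⟩
      · exact hpres _ (hρ₀D i hi)
      · show ((σ (ρ₀ j) : Fin n) : ℕ) = k
        rw [hρ₀j, hfix]
    · intro σ _ σ' _ h
      exact mul_right_cancel h
  refine le_trans ?_ step
  convert key using 2
  ext σ
  simp [Finset.mem_filter]
  ext σ
  simp [Finset.mem_filter]
noncomputable def chainSet (a : Fin n → ℝ) (p : (Fin n → Bool) × Fin n) :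
    Finset (Equiv.Perm (Fin n)) :=
  Finset.univ.filter fun ρ : Equiv.Perm (Fin n) =>
    (∀ i ∈ Dset a (lowEnd a p), ((ρ i : Fin n) : ℕ) < (Dset a (lowEnd a p)).card) ∧
    ((ρ p.2 : Fin n) : ℕ) = (Dset a (lowEnd a p)).card

lemma chainSet_card (a : Fin n → ℝ) {b : ℝ} {p : (Fin n → Bool) × Fin n}
    (hp : p ∈ cutEdges n a b) :
    Nat.factorial (Dset a (lowEnd a p)).card *
      Nat.factorial (n - 1 - (Dset a (lowEnd a p)).card) ≤ (chainSet a p).card :=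
  perm_count _ _ (j_not_mem a hp) (k_lt_n a hp)

lemma Dset_eq_filter (a : Fin n → ℝ) {b : ℝ} {p : (Fin n → Bool) × Fin n}
    (hp : p ∈ cutEdges n a b) {ρ : Equiv.Perm (Fin n)} (hρ : ρ ∈ chainSet a p) :
    Dset a (lowEnd a p) =
      Finset.univ.filter fun i : Fin n => ((ρ i : Fin n) : ℕ) < (Dset a (lowEnd a p)).card := by
  rw [chainSet, Finset.mem_filter] at hρ
  obtain ⟨-, hD, -⟩ := hρ
  apply Finset.eq_of_subset_of_card_le
  · intro i hi
    rw [Finset.mem_filter]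
    exact ⟨Finset.mem_univ _, hD i hi⟩
  · have himg : ∀ i ∈ (Finset.univ.filter fun i : Fin n =>
        ((ρ i : Fin n) : ℕ) < (Dset a (lowEnd a p)).card),
        ρ i ∈ (Finset.univ.filter fun x : Fin n => (x : ℕ) < (Dset a (lowEnd a p)).card) := by
      intro i hi
      rw [Finset.mem_filter] at hi ⊢
      exact ⟨Finset.mem_univ _, hi.2⟩
    have := Finset.card_le_card_of_injOn ρ himg (ρ.injective.injOn)
    rwa [card_filter_lt (le_of_lt (k_lt_n a hp))] at this

lemma chainSet_lt_empty (a : Fin n → ℝ) {b : ℝ} {p q : (Fin n → Bool) × Fin n}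
    (hp : p ∈ cutEdges n a b) (hq : q ∈ cutEdges n a b)
    (hlt : (Dset a (lowEnd a p)).card < (Dset a (lowEnd a q)).card)
    {ρ : Equiv.Perm (Fin n)} (h1 : ρ ∈ chainSet a p) (h2 : ρ ∈ chainSet a q) : False := by
  have hT := Dset_eq_filter a hq h2
  rw [chainSet, Finset.mem_filter] at h1 h2
  obtain ⟨-, hpD, hpj⟩ := h1
  have hsub : insert p.2 (Dset a (lowEnd a p)) ⊆ Dset a (lowEnd a q) := by
    rw [hT]
    intro i hi
    rw [Finset.mem_filter]
    rcases Finset.mem_insert.mp hi with rfl | hi'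
    · exact ⟨Finset.mem_univ _, by rw [hpj]; exact hlt⟩
    · exact ⟨Finset.mem_univ _, lt_trans (hpD i hi') hlt⟩
  have hb1 := sum_bounds a hp
  have hb2 := sum_bounds a hq
  have hle : ∑ i ∈ insert p.2 (Dset a (lowEnd a p)), |a i| ≤
      ∑ i ∈ Dset a (lowEnd a q), |a i| :=
    Finset.sum_le_sum_of_subset_of_nonneg hsub (fun i _ _ => abs_nonneg _)
  rw [Finset.sum_insert (j_not_mem a hp)] at hle
  linarith [hb1.1, hb1.2, hb2.1, hb2.2]

lemma chainSet_disjoint (a : Fin n → ℝ) {b : ℝ} {p q : (Fin n → Bool) × Fin n}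
    (hp : p ∈ cutEdges n a b) (hq : q ∈ cutEdges n a b) (hne : p ≠ q) :
    Disjoint (chainSet a p) (chainSet a q) := by
  rw [Finset.disjoint_left]
  intro ρ h1 h2
  rcases lt_trichotomy (Dset a (lowEnd a p)).card (Dset a (lowEnd a q)).card with h | h | h
  · exact chainSet_lt_empty a hp hq h h1 h2
  · have hTp := Dset_eq_filter a hp h1
    have hTq := Dset_eq_filter a hq h2
    have hD : Dset a (lowEnd a p) = Dset a (lowEnd a q) := by
      rw [hTp, hTq, h]
    rw [chainSet, Finset.mem_filter] at h1 h2
    have hjv : ((ρ p.2 : Fin n) : ℕ) = ((ρ q.2 : Fin n) : ℕ) := by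
      rw [h1.2.2, h2.2.2, h]
    have hj : p.2 = q.2 := ρ.injective (Fin.val_injective hjv)
    exact hne (edge_inj a hp hq hD hj)
  · exact chainSet_lt_empty a hq hp h h2 h1

lemma card_mul_le (a : Fin n → ℝ) (b : ℝ) (hn : 0 < n) :
    (cutEdges n a b).card ≤ n * Nat.choose (n - 1) ((n - 1) / 2) := by
  classical
  set m := (n - 1) / 2 with hm
  have hdisj : ((cutEdges n a b) : Set ((Fin n → Bool) × Fin n)).PairwiseDisjoint
      (chainSet a) := fun p hp q hq hne =>
    chainSet_disjoint a (by simpa using hp) (by simpa using hq) hne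
  have hsum : ∑ p ∈ cutEdges n a b, (chainSet a p).card ≤ Nat.factorial n := by
    have h := Finset.card_le_univ ((cutEdges n a b).disjiUnion (chainSet a) hdisj)
    rwa [Fintype.card_perm, Fintype.card_fin, Finset.card_disjiUnion] at h
  have hlow : ∀ p ∈ cutEdges n a b,
      Nat.factorial (n - 1) / Nat.choose (n - 1) m ≤ (chainSet a p).card := by
    intro p hp
    set k := (Dset a (lowEnd a p)).card with hk
    have hk1 : k ≤ n - 1 := by
      have := k_lt_n a hp
      omega
    have e1 : Nat.choose (n - 1) k * Nat.factorial k * Nat.factorial (n - 1 - k) =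
        Nat.factorial (n - 1) := Nat.choose_mul_factorial_mul_factorial hk1
    have e2 : Nat.factorial (n - 1) ≤
        (Nat.factorial k * Nat.factorial (n - 1 - k)) * Nat.choose (n - 1) m := by
      calc Nat.factorial (n - 1)
          = Nat.choose (n - 1) k * Nat.factorial k * Nat.factorial (n - 1 - k) := e1.symm
        _ = (Nat.factorial k * Nat.factorial (n - 1 - k)) * Nat.choose (n - 1) k := by ring
        _ ≤ (Nat.factorial k * Nat.factorial (n - 1 - k)) * Nat.choose (n - 1) m :=
            Nat.mul_le_mul_left _ (Nat.choose_le_middle _ _)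
    have e3 : Nat.factorial (n - 1) / Nat.choose (n - 1) m ≤
        Nat.factorial k * Nat.factorial (n - 1 - k) := by
      have hpos : 0 < Nat.choose (n - 1) m := Nat.choose_pos (by omega)
      have := Nat.div_le_div_right (c := Nat.choose (n - 1) m) e2
      rwa [Nat.mul_div_cancel _ hpos] at this
    exact le_trans e3 (chainSet_card a hp)
  have hconst : (cutEdges n a b).card * (Nat.factorial (n - 1) / Nat.choose (n - 1) m) ≤
      Nat.factorial n := by
    calc (cutEdges n a b).card * (Nat.factorial (n - 1) / Nat.choose (n - 1) m)
        = ∑ _p ∈ cutEdges n a b, (Nat.factorial (n - 1) / Nat.choose (n - 1) m) := by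
          rw [Finset.sum_const, smul_eq_mul]
      _ ≤ ∑ p ∈ cutEdges n a b, (chainSet a p).card := Finset.sum_le_sum hlow
      _ ≤ Nat.factorial n := hsum
  have hdvd : Nat.choose (n - 1) m ∣ Nat.factorial (n - 1) :=
    ⟨Nat.factorial m * Nat.factorial (n - 1 - m), by
      rw [← mul_assoc]
      exact (Nat.choose_mul_factorial_mul_factorial (by omega)).symm⟩
  have hmul : (cutEdges n a b).card * Nat.factorial (n - 1) ≤
      (n * Nat.choose (n - 1) m) * Nat.factorial (n - 1) := by
    calc (cutEdges n a b).card * Nat.factorial (n - 1)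
        = ((cutEdges n a b).card * (Nat.factorial (n - 1) / Nat.choose (n - 1) m)) *
            Nat.choose (n - 1) m := by
          rw [mul_assoc, Nat.div_mul_cancel hdvd]
      _ ≤ Nat.factorial n * Nat.choose (n - 1) m := Nat.mul_le_mul_right _ hconst
      _ = (n * Nat.choose (n - 1) m) * Nat.factorial (n - 1) := by
          rw [← Nat.mul_factorial_pred hn.ne']
          ring
  exact Nat.le_of_mul_le_mul_right hmul (Nat.factorial_pos _)


lemma cb_sqrt (m : ℕ) :
    (Nat.centralBinom m : ℝ) * Real.sqrt (3 * m + 1) ≤ 4 ^ m := by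
  induction m with
  | zero => simp [Nat.centralBinom]
  | succ m IH =>
    have hCB : ((m : ℝ) + 1) * (Nat.centralBinom (m + 1) : ℝ) =
        2 * (2 * m + 1) * (Nat.centralBinom m : ℝ) := by
      have := Nat.succ_mul_centralBinom_succ m
      have h2 := congrArg (fun x : ℕ => (x : ℝ)) this
      push_cast at h2
      push_cast
      linarith
    have hstep : (2 * (2 * (m : ℝ) + 1)) * Real.sqrt (3 * (m + 1) + 1) ≤
        (4 * ((m : ℝ) + 1)) * Real.sqrt (3 * m + 1) := by
      have hA : (0 : ℝ) ≤ 2 * (2 * (m : ℝ) + 1) := by positivity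
      have hB : (0 : ℝ) ≤ 4 * ((m : ℝ) + 1) := by positivity
      have h1 : (2 * (2 * (m : ℝ) + 1)) * Real.sqrt (3 * (m + 1) + 1) =
          Real.sqrt ((2 * (2 * (m : ℝ) + 1)) ^ 2 * (3 * (m + 1) + 1)) := by
        rw [Real.sqrt_mul (by positivity), Real.sqrt_sq hA]
      have h2 : (4 * ((m : ℝ) + 1)) * Real.sqrt (3 * m + 1) =
          Real.sqrt ((4 * ((m : ℝ) + 1)) ^ 2 * (3 * m + 1)) := by
        rw [Real.sqrt_mul (by positivity), Real.sqrt_sq hB]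
      rw [h1, h2]
      apply Real.sqrt_le_sqrt
      nlinarith [sq_nonneg ((m : ℝ))]
    have hCBpos : (0 : ℝ) ≤ (Nat.centralBinom m : ℝ) := Nat.cast_nonneg _
    have hmain : ((m : ℝ) + 1) * ((Nat.centralBinom (m + 1) : ℝ) *
        Real.sqrt (3 * (m + 1) + 1)) ≤ ((m : ℝ) + 1) * 4 ^ (m + 1) := by
      calc ((m : ℝ) + 1) * ((Nat.centralBinom (m + 1) : ℝ) * Real.sqrt (3 * (m + 1) + 1))
          = (Nat.centralBinom m : ℝ) * ((2 * (2 * (m : ℝ) + 1)) *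
              Real.sqrt (3 * (m + 1) + 1)) := by
            rw [← mul_assoc, hCB]; ring
        _ ≤ (Nat.centralBinom m : ℝ) * ((4 * ((m : ℝ) + 1)) * Real.sqrt (3 * m + 1)) :=
            mul_le_mul_of_nonneg_left hstep hCBpos
        _ = (4 * ((m : ℝ) + 1)) * ((Nat.centralBinom m : ℝ) * Real.sqrt (3 * m + 1)) := by
            ring
        _ ≤ (4 * ((m : ℝ) + 1)) * 4 ^ m := by
            apply mul_le_mul_of_nonneg_left IH (by positivity)
        _ = ((m : ℝ) + 1) * 4 ^ (m + 1) := by ring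
    have hpos : (0 : ℝ) < (m : ℝ) + 1 := by positivity
    have := le_of_mul_le_mul_left hmain hpos
    push_cast
    convert this using 3

lemma mid_le_cb {n : ℕ} (hn : 1 ≤ n) :
    Nat.choose (n - 1) ((n - 1) / 2) ≤ Nat.centralBinom (n / 2) := by
  rcases Nat.even_or_odd n with ⟨t, ht⟩ | ⟨t, ht⟩
  · -- n = 2t, t ≥ 1; write t = s+1
    obtain ⟨s, rfl⟩ : ∃ s, t = s + 1 := ⟨t - 1, by omega⟩
    have h1 : n - 1 = 2 * s + 1 := by omega
    have h2 : (n - 1) / 2 = s := by omega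
    have h3 : n / 2 = s + 1 := by omega
    rw [h2, h3, h1, Nat.centralBinom]
    have : 2 * (s + 1) = (2 * s + 1) + 1 := by ring
    rw [this]
    have hp : Nat.choose ((2 * s + 1) + 1) (s + 1) =
        Nat.choose (2 * s + 1) s + Nat.choose (2 * s + 1) (s + 1) :=
      Nat.choose_succ_succ _ _
    rw [hp]
    exact Nat.le_add_right _ _
  · -- n = 2t+1
    have h1 : n - 1 = 2 * t := by omega
    have h2 : (n - 1) / 2 = t := by omega
    have h3 : n / 2 = t := by omega
    rw [h2, h3, h1]
    simp [Nat.centralBinom]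

end Oneil

theorem oneil_hyperplane_cut_bound :
    ∃ C : ℝ, ∀ n : ℕ, 1 ≤ n → ∀ a : Fin n → ℝ, a ≠ 0 → ∀ b : ℝ,
      ((cutEdges n a b).card : ℝ) ≤ C * Real.sqrt n * 2 ^ n := by
  refine ⟨1, fun n hn a _ b => ?_⟩
  have hn0 : 0 < n := hn
  have h1 : (cutEdges n a b).card ≤ n * Nat.choose (n - 1) ((n - 1) / 2) :=
    Oneil.card_mul_le a b hn0
  have h2 : Nat.choose (n - 1) ((n - 1) / 2) ≤ Nat.centralBinom (n / 2) :=
    Oneil.mid_le_cb hn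
  have hA : ((cutEdges n a b).card : ℝ) ≤ (n : ℝ) * (Nat.centralBinom (n / 2) : ℝ) := by
    exact_mod_cast le_trans h1 (Nat.mul_le_mul_left n h2)
  have h3 : (Nat.centralBinom (n / 2) : ℝ) * Real.sqrt (3 * (n / 2 : ℕ) + 1) ≤
      4 ^ (n / 2 : ℕ) := Oneil.cb_sqrt (n / 2)
  have h4 : (n : ℝ) ≤ 3 * ((n / 2 : ℕ) : ℝ) + 1 := by
    have h : n ≤ 3 * (n / 2) + 1 := by omega
    calc (n : ℝ) ≤ ((3 * (n / 2) + 1 : ℕ) : ℝ) := by exact_mod_cast h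
      _ = 3 * ((n / 2 : ℕ) : ℝ) + 1 := by push_cast; ring
  have h5 : Real.sqrt n ≤ Real.sqrt (3 * ((n / 2 : ℕ) : ℝ) + 1) := Real.sqrt_le_sqrt h4
  have h6 : ((4 : ℝ)) ^ (n / 2 : ℕ) ≤ 2 ^ n := by
    rw [show (4 : ℝ) = 2 ^ 2 by norm_num, ← pow_mul]
    exact pow_le_pow_right₀ one_le_two (by omega)
  have hCB : (Nat.centralBinom (n / 2) : ℝ) * Real.sqrt n ≤ 2 ^ n := by
    calc (Nat.centralBinom (n / 2) : ℝ) * Real.sqrt n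
        ≤ (Nat.centralBinom (n / 2) : ℝ) * Real.sqrt (3 * ((n / 2 : ℕ) : ℝ) + 1) :=
          mul_le_mul_of_nonneg_left h5 (Nat.cast_nonneg _)
      _ ≤ 4 ^ (n / 2 : ℕ) := h3
      _ ≤ 2 ^ n := h6
  have hs : Real.sqrt n * Real.sqrt n = (n : ℝ) := Real.mul_self_sqrt (Nat.cast_nonneg _)
  have hspos : 0 < Real.sqrt n := Real.sqrt_pos.mpr (by exact_mod_cast hn0)
  apply le_of_mul_le_mul_right _ hspos
  calc ((cutEdges n a b).card : ℝ) * Real.sqrt n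
      ≤ ((n : ℝ) * (Nat.centralBinom (n / 2) : ℝ)) * Real.sqrt n :=
        mul_le_mul_of_nonneg_right hA (Real.sqrt_nonneg _)
    _ = (n : ℝ) * ((Nat.centralBinom (n / 2) : ℝ) * Real.sqrt n) := by ring
    _ ≤ (n : ℝ) * 2 ^ n := mul_le_mul_of_nonneg_left hCB (Nat.cast_nonneg _)
    _ = 1 * Real.sqrt n * 2 ^ n * Real.sqrt n := by linear_combination (-(2:ℝ)^n) * hs
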